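/- Let V ⊆ K[G] be an S-module, v = Σ_{g∈G} λ_g·g ∈ V, and λ ∈ K. If T = {g ∈ G : λ_g = λ}, then the simple quantity Σ_{g∈T} g lies in V. -/

import Mathlib

open Finset

private lemma sq_apply {K : Type*} [Field K] {G : Type*} [Group G] [Fintype G] [DecidableEq G]
    (C : Finset G) (x : G) :
    (∑ g ∈ C, MonoidAlgebra.single g (1 : K)).coeff x = if x ∈ C then (1 : K) else 0 := by
  classical
  rw [MonoidAlgebra.coeff_sum, Finsupp.finset_sum_apply]
  simp [MonoidAlgebra.coeff_single, Finsupp.single_apply]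

/-- the set of group elements whose coefficient in an element of an
S-module equals a fixed scalar has its simple quantity in the S-module. -/
theorem stmt_2 {K : Type*} [Field K] {G : Type*} [Group G] [Fintype G] [DecidableEq G]
    (V : Submodule K (MonoidAlgebra K G)) (P : Finpartition (univ : Finset G))
    (hV : V = Submodule.span K
      ((fun C : Finset G => ∑ g ∈ C, MonoidAlgebra.single g (1 : K)) '' ↑P.parts))
    (v : MonoidAlgebra K G) (hv : v ∈ V) (lam : K)
    (T : Finset G) (hT : ∀ g : G, g ∈ T ↔ v.coeff g = lam) :
    (∑ g ∈ T, MonoidAlgebra.single g (1 : K)) ∈ V := by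
  classical
  set f : Finset G → MonoidAlgebra K G := fun C => ∑ g ∈ C, MonoidAlgebra.single g (1 : K)
    with hf
  have hfx : ∀ (C : Finset G) (x : G), (f C).coeff x = if x ∈ C then (1 : K) else 0 :=
    fun C x => sq_apply C x
  -- injectivity of f on parts
  have hinj : ∀ C ∈ P.parts, ∀ C' ∈ P.parts, f C = f C' → C = C' := by
    intro C _ C' _ h
    ext x
    have := congrArg (fun w : MonoidAlgebra K G => w.coeff x) h
    simp only [hfx] at this
    by_cases hx : x ∈ C <;> by_cases hx' : x ∈ C' <;> simp [hx, hx'] at this ⊢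
  -- express v as a linear combination over parts
  rw [hV] at hv ⊢
  have himg : (f '' ↑P.parts) = ↑(P.parts.image f) := by rw [Finset.coe_image]
  rw [himg, Submodule.mem_span_finset] at hv
  obtain ⟨c, -, hc⟩ := hv
  rw [Finset.sum_image hinj] at hc
  -- the coefficient of v at x is c (f (P.part x))
  have hcoeff : ∀ x : G, v.coeff x = c (f (P.part x)) := by
    intro x
    have hx := P.part_mem.2 (mem_univ x)
    have hxm := P.mem_part (mem_univ x)
    have h1 : v.coeff x = ∑ C ∈ P.parts, c (f C) * (f C).coeff x := by
      rw [← hc, MonoidAlgebra.coeff_sum, Finsupp.finset_sum_apply]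
      exact Finset.sum_congr rfl fun C _ => MonoidAlgebra.coeff_smul_apply _ _ _
    rw [h1, Finset.sum_eq_single (P.part x)]
    · rw [hfx, if_pos hxm, mul_one]
    · intro C hC hne
      have hxC : x ∉ C := fun h => hne (P.eq_of_mem_parts hC hx h hxm)
      rw [hfx, if_neg hxC, mul_zero]
    · intro h; exact absurd hx h
  -- T is the disjoint union of the parts with coefficient lam
  have hTeq : f T = ∑ C ∈ P.parts.filter (fun C => c (f C) = lam), f C := by
    ext x
    have hx := P.part_mem.2 (mem_univ x)
    have hxm := P.mem_part (mem_univ x)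
    have hR : (∑ C ∈ P.parts.filter (fun C => c (f C) = lam), f C).coeff x
        = ∑ C ∈ P.parts.filter (fun C => c (f C) = lam), if x ∈ C then (1 : K) else 0 := by
      rw [MonoidAlgebra.coeff_sum, Finsupp.finset_sum_apply]
      exact Finset.sum_congr rfl fun C _ => hfx C x
    rw [hR, hfx]
    by_cases hl : c (f (P.part x)) = lam
    · have hxT : x ∈ T := (hT x).2 (by rw [hcoeff x]; exact hl)
      rw [if_pos hxT, Finset.sum_eq_single_of_mem (P.part x) (Finset.mem_filter.2 ⟨hx, hl⟩)]
      · rw [if_pos hxm]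
      · intro C hC hne
        have hxC : x ∉ C := fun h =>
          hne (P.eq_of_mem_parts (Finset.mem_filter.1 hC).1 hx h hxm)
        rw [if_neg hxC]
    · have hxT : x ∉ T := fun h => hl (by rw [← hcoeff x]; exact (hT x).1 h)
      rw [if_neg hxT, eq_comm, Finset.sum_eq_zero]
      intro C hC
      obtain ⟨hC1, hC2⟩ := Finset.mem_filter.1 hC
      have hxC : x ∉ C := fun h => hl (by rw [P.part_eq_of_mem hC1 h]; exact hC2)
      rw [if_neg hxC]
  show f T ∈ _
  rw [hTeq]
  exact Submodule.sum_mem _ fun C hC =>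
    Submodule.subset_span ⟨C, (Finset.mem_filter.1 hC).1, rfl⟩
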